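/- Let T be a contraction on a nonzero complex Hilbert space H whose defect spaces 𝒟_T and 𝒟_{T*} both have finite dimension N, and let V be a unitary operator on a nonzero complex Hilbert space H'. Suppose the family of closures of numerical ranges of unitary N-dilations of T (unitary operators on H ⊕ ℂ^N whose compression to H is T) wraps cl W(T). Then the family of closures of numerical ranges of unitary N-dilations of T ⊕ V (unitary operators on (H ⊕ H') ⊕ ℂ^N whose compression to H ⊕ H' is T ⊕ V) wraps cl W(T ⊕ V). -/

import Mathlib

open scoped InnerProductSpace
open Filter Topology

/-- The numerical range of a bounded operator: `W(T) = {⟨Tx, x⟩ : ‖x‖ = 1}`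
(written with Mathlib's inner product, which is linear in the second variable). -/
def numericalRange {H : Type*} [NormedAddCommGroup H] [InnerProductSpace ℂ H]
    (T : H →L[ℂ] H) : Set ℂ :=
  {z | ∃ x : H, ‖x‖ = 1 ∧ (inner ℂ x (T x) : ℂ) = z}

/-- The defect operator `D_T = (I - T*T)^{1/2}` of a contraction. -/
noncomputable def defectOp {H : Type*} [NormedAddCommGroup H] [InnerProductSpace ℂ H]
    [CompleteSpace H] (T : H →L[ℂ] H) : H →L[ℂ] H :=
  CFC.sqrt (1 - ContinuousLinearMap.adjoint T * T)

/-- The defect space `𝒟_T = closure (range D_T)`. -/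
noncomputable def defectSpace {H : Type*} [NormedAddCommGroup H] [InnerProductSpace ℂ H]
    [CompleteSpace H] (T : H →L[ℂ] H) : Submodule ℂ H :=
  (LinearMap.range (defectOp T : H →ₗ[ℂ] H)).topologicalClosure

/-- `U` is a unitary dilation of `T` on the orthogonal direct sum `H ⊕ E`
(realized as `WithLp 2 (H × E)`): `U` is unitary and the compression of `U` to `H` is `T`. -/
def IsUnitaryDilation {H E : Type*} [NormedAddCommGroup H] [InnerProductSpace ℂ H]
    [CompleteSpace H] [NormedAddCommGroup E] [InnerProductSpace ℂ E] [CompleteSpace E]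
    (T : H →L[ℂ] H) (U : WithLp 2 (H × E) →L[ℂ] WithLp 2 (H × E)) : Prop :=
  U ∈ unitary (WithLp 2 (H × E) →L[ℂ] WithLp 2 (H × E)) ∧
    ∀ x : H, T x = (WithLp.equiv 2 (H × E) (U ((WithLp.equiv 2 (H × E)).symm (x, 0)))).1

/-- A family `(τ x)_{x ∈ X}` of subsets of `ℂ` *wraps* a set `A ⊆ ℂ` if every open
half-plane `{z : Re (c z) < r}` (`c ≠ 0`) containing `A` contains some member `τ x`. -/
def Wraps {X : Type*} (A : Set ℂ) (τ : X → Set ℂ) : Prop :=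
  ∀ (c : ℂ), c ≠ 0 → ∀ r : ℝ,
    A ⊆ {z : ℂ | (c * z).re < r} → ∃ x : X, τ x ⊆ {z : ℂ | (c * z).re < r}

/-- The direct sum `T ⊕ V` of two operators, acting on the Hilbert space direct sum
`WithLp 2 (H × H')`. -/
noncomputable def prodOp {H H' : Type*} [NormedAddCommGroup H] [InnerProductSpace ℂ H]
    [NormedAddCommGroup H'] [InnerProductSpace ℂ H']
    (T : H →L[ℂ] H) (V : H' →L[ℂ] H') : WithLp 2 (H × H') →L[ℂ] WithLp 2 (H × H') :=
  ((WithLp.prodContinuousLinearEquiv 2 ℂ H H').symm.toContinuousLinearMap).comp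
    ((T.prodMap V).comp (WithLp.prodContinuousLinearEquiv 2 ℂ H H').toContinuousLinearMap)

section Aux

variable {X Y Z : Type*} [NormedAddCommGroup X] [InnerProductSpace ℂ X]
  [NormedAddCommGroup Y] [InnerProductSpace ℂ Y]
  [NormedAddCommGroup Z] [InnerProductSpace ℂ Z]

lemma prodOp_fst (T : X →L[ℂ] X) (V : Y →L[ℂ] Y) (x : WithLp 2 (X × Y)) :
    (prodOp T V x).fst = T x.fst := rfl

lemma prodOp_snd (T : X →L[ℂ] X) (V : Y →L[ℂ] Y) (x : WithLp 2 (X × Y)) :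
    (prodOp T V x).snd = V x.snd := rfl

lemma prodOp_mul (A A' : X →L[ℂ] X) (B B' : Y →L[ℂ] Y) :
    prodOp A B * prodOp A' B' = prodOp (A * A') (B * B') := by
  ext x
  rfl

lemma prodOp_one : (prodOp (1 : X →L[ℂ] X) (1 : Y →L[ℂ] Y)) = 1 := by
  ext x
  rfl

variable [CompleteSpace X] [CompleteSpace Y] [CompleteSpace Z]

lemma adjoint_prodOp (A : X →L[ℂ] X) (B : Y →L[ℂ] Y) :
    ContinuousLinearMap.adjoint (prodOp A B) =
      prodOp (ContinuousLinearMap.adjoint A) (ContinuousLinearMap.adjoint B) := by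
  symm
  rw [ContinuousLinearMap.eq_adjoint_iff]
  intro x y
  simp only [WithLp.prod_inner_apply, WithLp.ofLp_fst, WithLp.ofLp_snd, prodOp_fst, prodOp_snd,
    ContinuousLinearMap.adjoint_inner_left, ContinuousLinearMap.adjoint_inner_right]

lemma prodOp_unitary {A : X →L[ℂ] X} {B : Y →L[ℂ] Y}
    (hA : A ∈ unitary (X →L[ℂ] X)) (hB : B ∈ unitary (Y →L[ℂ] Y)) :
    prodOp A B ∈ unitary (WithLp 2 (X × Y) →L[ℂ] WithLp 2 (X × Y)) := by
  rw [Unitary.mem_iff] at hA hB ⊢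
  rw [ContinuousLinearMap.star_eq_adjoint, adjoint_prodOp, prodOp_mul, prodOp_mul,
    ← ContinuousLinearMap.star_eq_adjoint A, ← ContinuousLinearMap.star_eq_adjoint B,
    hA.1, hB.1, hA.2, hB.2, prodOp_one]
  exact ⟨rfl, rfl⟩

/-- the swap ((a,b),c) ↦ ((a,c),b) as a linear equiv -/
def swapLE : WithLp 2 (WithLp 2 (X × Y) × Z) ≃ₗ[ℂ] WithLp 2 (WithLp 2 (X × Z) × Y) where
  toFun x := WithLp.toLp 2 (WithLp.toLp 2 (x.fst.fst, x.snd), x.fst.snd)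
  invFun y := WithLp.toLp 2 (WithLp.toLp 2 (y.fst.fst, y.snd), y.fst.snd)
  map_add' _ _ := rfl
  map_smul' _ _ := rfl
  left_inv _ := rfl
  right_inv _ := rfl

noncomputable def swapLI :
    WithLp 2 (WithLp 2 (X × Y) × Z) ≃ₗᵢ[ℂ] WithLp 2 (WithLp 2 (X × Z) × Y) :=
  LinearEquiv.isometryOfInner swapLE (by
    intro x y
    simp only [swapLE, LinearEquiv.coe_mk, LinearMap.coe_mk, AddHom.coe_mk, WithLp.prod_inner_apply, WithLp.ofLp_toLp,
      WithLp.ofLp_fst, WithLp.ofLp_snd, WithLp.toLp_fst, WithLp.toLp_snd]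
    change inner ℂ x.fst.fst y.fst.fst + inner ℂ x.snd y.snd + inner ℂ x.fst.snd y.fst.snd = _
    ring)

/-- conjugation of an operator by a linear isometry equivalence -/
noncomputable def conjLI (e : X ≃ₗᵢ[ℂ] Y) (A : Y →L[ℂ] Y) : X →L[ℂ] X :=
  ((e.symm.toContinuousLinearEquiv : Y →L[ℂ] X).comp A).comp
    (e.toContinuousLinearEquiv : X →L[ℂ] Y)

lemma conjLI_apply (e : X ≃ₗᵢ[ℂ] Y) (A : Y →L[ℂ] Y) (x : X) :
    conjLI e A x = e.symm (A (e x)) := rfl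

lemma adjoint_conjLI (e : X ≃ₗᵢ[ℂ] Y) (A : Y →L[ℂ] Y) :
    ContinuousLinearMap.adjoint (conjLI e A) =
      conjLI e (ContinuousLinearMap.adjoint A) := by
  symm
  rw [ContinuousLinearMap.eq_adjoint_iff]
  intro x y
  rw [conjLI_apply, conjLI_apply]
  calc (inner ℂ (e.symm ((ContinuousLinearMap.adjoint A) (e x))) y : ℂ)
      = inner ℂ (e (e.symm ((ContinuousLinearMap.adjoint A) (e x)))) (e y) :=
        (e.inner_map_map _ _).symm
    _ = inner ℂ ((ContinuousLinearMap.adjoint A) (e x)) (e y) := by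
        rw [e.apply_symm_apply]
    _ = inner ℂ (e x) (A (e y)) := ContinuousLinearMap.adjoint_inner_left _ _ _
    _ = inner ℂ (e x) (e (e.symm (A (e y)))) := by rw [e.apply_symm_apply]
    _ = inner ℂ x (e.symm (A (e y))) := e.inner_map_map _ _

lemma conjLI_mul (e : X ≃ₗᵢ[ℂ] Y) (A B : Y →L[ℂ] Y) :
    conjLI e A * conjLI e B = conjLI e (A * B) := by
  ext x
  simp [conjLI_apply, ContinuousLinearMap.mul_apply]

lemma conjLI_one (e : X ≃ₗᵢ[ℂ] Y) : conjLI e (1 : Y →L[ℂ] Y) = 1 := by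
  ext x
  simp [conjLI_apply]

lemma conjLI_unitary (e : X ≃ₗᵢ[ℂ] Y) {A : Y →L[ℂ] Y}
    (hA : A ∈ unitary (Y →L[ℂ] Y)) :
    conjLI e A ∈ unitary (X →L[ℂ] X) := by
  rw [Unitary.mem_iff] at hA ⊢
  rw [ContinuousLinearMap.star_eq_adjoint, adjoint_conjLI, conjLI_mul, conjLI_mul,
    ← ContinuousLinearMap.star_eq_adjoint A, hA.1, hA.2, conjLI_one]
  exact ⟨rfl, rfl⟩

lemma numericalRange_conjLI (e : X ≃ₗᵢ[ℂ] Y) (A : Y →L[ℂ] Y) :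
    numericalRange (conjLI e A) = numericalRange A := by
  ext z
  constructor
  · rintro ⟨x, hx, rfl⟩
    refine ⟨e x, by rw [e.norm_map, hx], ?_⟩
    rw [conjLI_apply, ← e.symm.inner_map_map (e x) (A (e x)), e.symm_apply_apply]
  · rintro ⟨y, hy, rfl⟩
    refine ⟨e.symm y, by rw [e.symm.norm_map, hy], ?_⟩
    rw [conjLI_apply, e.apply_symm_apply, e.symm.inner_map_map]

end Aux

section Aux2

variable {X Y : Type*} [NormedAddCommGroup X] [InnerProductSpace ℂ X]
  [NormedAddCommGroup Y] [InnerProductSpace ℂ Y]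

lemma numericalRange_bounded (A : X →L[ℂ] X) :
    numericalRange A ⊆ Metric.closedBall 0 ‖A‖ := by
  rintro z ⟨x, hx, rfl⟩
  rw [Metric.mem_closedBall, dist_zero_right]
  calc ‖(inner ℂ x (A x) : ℂ)‖ ≤ ‖x‖ * ‖A x‖ := norm_inner_le_norm _ _
    _ ≤ ‖x‖ * (‖A‖ * ‖x‖) := by
        gcongr
        exact A.le_opNorm x
    _ = ‖A‖ := by rw [hx]; ring

lemma re_lt_of_numericalRange_subset {A : X →L[ℂ] X} {c : ℂ} {r : ℝ}
    (h : numericalRange A ⊆ {z : ℂ | (c * z).re < r}) {x : X} (hx : x ≠ 0) :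
    (c * (inner ℂ x (A x) : ℂ)).re < r * ‖x‖ ^ 2 := by
  have hn : (0 : ℝ) < ‖x‖ := norm_pos_iff.mpr hx
  set u : X := (‖x‖⁻¹ : ℂ) • x with hu_def
  have hu : ‖u‖ = 1 := norm_smul_inv_norm hx
  have hx2 : c * (inner ℂ x (A x) : ℂ) = (↑(‖x‖ ^ 2) : ℂ) * (c * (inner ℂ u (A u) : ℂ)) := by
    have : (inner ℂ u (A u) : ℂ)
        = (↑(‖x‖⁻¹) : ℂ) * ((↑(‖x‖⁻¹) : ℂ) * (inner ℂ x (A x) : ℂ)) := by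
      simp only [hu_def, map_smul, inner_smul_left, inner_smul_right, Complex.ofReal_inv]
      rw [map_inv₀, Complex.conj_ofReal]
    have hnc : (↑‖x‖ : ℂ) ≠ 0 := by exact_mod_cast hn.ne'
    rw [this]
    push_cast
    field_simp
  have hmem : (c * (inner ℂ u (A u) : ℂ)).re < r := h ⟨u, hu, rfl⟩
  rw [hx2, Complex.re_ofReal_mul]
  calc ‖x‖ ^ 2 * (c * (inner ℂ u (A u) : ℂ)).re < ‖x‖ ^ 2 * r := by
        exact mul_lt_mul_of_pos_left hmem (by positivity)
    _ = r * ‖x‖ ^ 2 := by ring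

lemma numericalRange_prodOp_subset {A : X →L[ℂ] X} {B : Y →L[ℂ] Y} {c : ℂ} {r : ℝ}
    (hA : numericalRange A ⊆ {z : ℂ | (c * z).re < r})
    (hB : numericalRange B ⊆ {z : ℂ | (c * z).re < r}) :
    numericalRange (prodOp A B) ⊆ {z : ℂ | (c * z).re < r} := by
  rintro z ⟨ξ, hξ, rfl⟩
  have hsum : ‖ξ.fst‖ ^ 2 + ‖ξ.snd‖ ^ 2 = 1 := by
    rw [← WithLp.prod_norm_sq_eq_of_L2, hξ]; norm_num
  have hinner : (inner ℂ ξ (prodOp A B ξ) : ℂ)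
      = (inner ℂ ξ.fst (A ξ.fst) : ℂ) + (inner ℂ ξ.snd (B ξ.snd) : ℂ) := by
    simp only [WithLp.prod_inner_apply, WithLp.ofLp_fst, WithLp.ofLp_snd, prodOp_fst, prodOp_snd]
  rw [Set.mem_setOf_eq, hinner, mul_add, Complex.add_re]
  have hrsum : r * ‖ξ.fst‖ ^ 2 + r * ‖ξ.snd‖ ^ 2 = r := by
    rw [← mul_add, hsum, mul_one]
  by_cases h1 : ξ.fst = 0
  · have e1 : (c * (inner ℂ ξ.fst (A ξ.fst) : ℂ)).re = 0 := by simp [h1]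
    have h2 : ξ.snd ≠ 0 := by
      intro h2
      rw [h1, h2] at hsum
      simp at hsum
    have t2 := re_lt_of_numericalRange_subset hB h2
    have : ‖ξ.snd‖ ^ 2 = 1 := by
      rw [h1] at hsum; simpa using hsum
    rw [this, mul_one] at t2
    linarith
  · have t1 := re_lt_of_numericalRange_subset hA h1
    by_cases h2 : ξ.snd = 0
    · have e2 : (c * (inner ℂ ξ.snd (B ξ.snd) : ℂ)).re = 0 := by simp [h2]
      have : ‖ξ.fst‖ ^ 2 = 1 := by
        rw [h2] at hsum; simpa using hsum
      rw [this, mul_one] at t1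
      linarith
    · have t2 := re_lt_of_numericalRange_subset hB h2
      linarith

lemma numericalRange_left_subset (A : X →L[ℂ] X) (B : Y →L[ℂ] Y) :
    numericalRange A ⊆ numericalRange (prodOp A B) := by
  rintro z ⟨x, hx, rfl⟩
  refine ⟨WithLp.toLp 2 (x, (0 : Y)), ?_, ?_⟩
  · rw [WithLp.prod_norm_eq_of_L2]
    simp [hx]
  · simp only [WithLp.prod_inner_apply, WithLp.ofLp_fst, WithLp.ofLp_snd, prodOp_fst, prodOp_snd]
    simp

lemma numericalRange_right_subset (A : X →L[ℂ] X) (B : Y →L[ℂ] Y) :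
    numericalRange B ⊆ numericalRange (prodOp A B) := by
  rintro z ⟨y, hy, rfl⟩
  refine ⟨WithLp.toLp 2 ((0 : X), y), ?_, ?_⟩
  · rw [WithLp.prod_norm_eq_of_L2]
    simp [hy]
  · simp only [WithLp.prod_inner_apply, WithLp.ofLp_fst, WithLp.ofLp_snd, prodOp_fst, prodOp_snd]
    simp

end Aux2


/-- Let `T` be a contraction with `dim 𝒟_T = dim 𝒟_{T*} = N < ∞` and let
`V` be unitary.  If the closures of the numerical ranges of the unitary `N`-dilations of
`T` wrap `closure W(T)`, then the closures of the numerical ranges of the unitary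
`N`-dilations of `T ⊕ V` wrap `closure W(T ⊕ V)`. -/
theorem wraps_dilations_prod_unitary
    {H : Type*} [NormedAddCommGroup H] [InnerProductSpace ℂ H] [CompleteSpace H]
    [Nontrivial H]
    {H' : Type*} [NormedAddCommGroup H'] [InnerProductSpace ℂ H'] [CompleteSpace H']
    [Nontrivial H']
    (N : ℕ) (T : H →L[ℂ] H) (hT : ‖T‖ ≤ 1)
    [FiniteDimensional ℂ (defectSpace T)]
    [FiniteDimensional ℂ (defectSpace (ContinuousLinearMap.adjoint T))]
    (hdT : Module.finrank ℂ (defectSpace T) = N)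
    (hdTs : Module.finrank ℂ (defectSpace (ContinuousLinearMap.adjoint T)) = N)
    (V : H' →L[ℂ] H') (hV : V ∈ unitary (H' →L[ℂ] H'))
    (hwrap : Wraps (closure (numericalRange T))
      (fun U : {U : WithLp 2 (H × EuclideanSpace ℂ (Fin N)) →L[ℂ]
          WithLp 2 (H × EuclideanSpace ℂ (Fin N)) // IsUnitaryDilation T U} =>
        closure (numericalRange U.1))) :
    Wraps (closure (numericalRange (prodOp T V)))
      (fun U : {U : WithLp 2 (WithLp 2 (H × H') × EuclideanSpace ℂ (Fin N)) →L[ℂ]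
          WithLp 2 (WithLp 2 (H × H') × EuclideanSpace ℂ (Fin N)) //
            IsUnitaryDilation (prodOp T V) U} =>
        closure (numericalRange U.1)) := by
  intro c hc r hsub
  set E := EuclideanSpace ℂ (Fin N)
  set K := closure (numericalRange (prodOp T V)) with hK_def
  -- K is compact and nonempty
  have hKb : Bornology.IsBounded K :=
    ((Metric.isBounded_closedBall).subset (numericalRange_bounded (prodOp T V))).closure
  have hKc : IsCompact K := Metric.isCompact_of_isClosed_isBounded isClosed_closure hKb
  have hKne : K.Nonempty := by
    obtain ⟨x, hx⟩ := exists_ne (0 : H)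
    refine ⟨(inner ℂ ((‖x‖⁻¹ : ℂ) • x) (T ((‖x‖⁻¹ : ℂ) • x)) : ℂ), subset_closure ?_⟩
    exact numericalRange_left_subset T V ⟨_, norm_smul_inv_norm hx, rfl⟩
  -- maximum of Re (c z) on K
  have hcont : Continuous fun z : ℂ => (c * z).re :=
    Complex.continuous_re.comp (continuous_const.mul continuous_id)
  obtain ⟨z₀, hz₀K, hmax⟩ := hKc.exists_isMaxOn hKne hcont.continuousOn
  set m := (c * z₀).re with hm_def
  have hmr : m < r := hsub hz₀K
  set r₁ := (m + r) / 2 with hr₁_def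
  have hmr₁ : m < r₁ := by rw [hr₁_def]; linarith
  have hr₁r : r₁ < r := by rw [hr₁_def]; linarith
  have hKm : ∀ z ∈ K, (c * z).re ≤ m := fun z hz => hmax hz
  -- apply the hypothesis to get a dilation of T
  obtain ⟨U, hU⟩ := hwrap c hc r₁ (by
    intro z hz
    have : z ∈ K := closure_mono (numericalRange_left_subset T V) hz
    exact lt_of_le_of_lt (hKm z this) hmr₁)
  have hWU : numericalRange U.1 ⊆ {z : ℂ | (c * z).re < r₁} :=
    subset_closure.trans hU
  have hWV : numericalRange V ⊆ {z : ℂ | (c * z).re < r₁} := by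
    intro z hz
    have : z ∈ K := subset_closure (numericalRange_right_subset T V hz)
    exact lt_of_le_of_lt (hKm z this) hmr₁
  -- build the dilation of T ⊕ V
  set Ut : WithLp 2 (WithLp 2 (H × H') × E) →L[ℂ] WithLp 2 (WithLp 2 (H × H') × E) :=
    conjLI (swapLI (X := H) (Y := H') (Z := E)) (prodOp U.1 V) with hUt_def
  have hdil : IsUnitaryDilation (prodOp T V) Ut := by
    constructor
    · exact conjLI_unitary _ (prodOp_unitary U.2.1 hV)
    · intro x
      show prodOp T V x
        = WithLp.toLp 2 ((U.1 (WithLp.toLp 2 (x.fst, (0 : E)) : WithLp 2 (H × E))).fst, V x.snd)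
      have h1 : (prodOp T V x).fst = T x.fst := rfl
      have h2 : (prodOp T V x).snd = V x.snd := rfl
      have h3 : T x.fst = (U.1 (WithLp.toLp 2 (x.fst, (0 : E)) : WithLp 2 (H × E))).fst := U.2.2 x.fst
      calc prodOp T V x = WithLp.toLp 2 ((prodOp T V x).fst, (prodOp T V x).snd) := rfl
        _ = WithLp.toLp 2 ((U.1 (WithLp.toLp 2 (x.fst, (0 : E)) : WithLp 2 (H × E))).fst, V x.snd) := by
            rw [h1, h2, h3]
  have hNR : numericalRange Ut ⊆ {z : ℂ | (c * z).re < r₁} := by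
    rw [hUt_def, numericalRange_conjLI]
    exact numericalRange_prodOp_subset hWU hWV
  refine ⟨⟨Ut, hdil⟩, ?_⟩
  intro z hz
  have hcl : closure (numericalRange Ut) ⊆ {z : ℂ | (c * z).re ≤ r₁} :=
    closure_minimal (fun w hw => (le_of_lt (hNR hw) : (c * w).re ≤ r₁))
      (isClosed_le hcont continuous_const)
  exact lt_of_le_of_lt (hcl hz) hr₁r
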